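/- In a 4-way latin square of order 7, it is impossible that two rows consist entirely of fixed cells (7 fixed cells each) while a third row has exactly 2 fixed cells. -/

import Mathlib

/-- A μ-way latin square of order n: μ latin squares on symbols `Fin n` such that
in every cell the μ entries are all equal or pairwise distinct. -/
def IsMuWayLatinSquare {μ n : ℕ} (L : Fin μ → Fin n → Fin n → Fin n) : Prop :=
  (∀ m i, Function.Injective (L m i)) ∧
  (∀ m j, Function.Injective (fun i => L m i j)) ∧
  (∀ i j, (∀ a b, L a i j = L b i j) ∨ Function.Injective (fun a => L a i j))

/-- A cell is fixed when the μ entries there coincide. -/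
def IsFixedCell {μ n : ℕ} (L : Fin μ → Fin n → Fin n → Fin n) (i j : Fin n) : Prop :=
  ∀ a b, L a i j = L b i j

instance {μ n : ℕ} (L : Fin μ → Fin n → Fin n → Fin n) (i j : Fin n) :
    Decidable (IsFixedCell L i j) :=
  inferInstanceAs (Decidable (∀ a b, L a i j = L b i j))

/-- The number of fixed cells. -/
def numFixed {μ n : ℕ} (L : Fin μ → Fin n → Fin n → Fin n) : ℕ :=
  (Finset.univ.filter fun p : Fin n × Fin n => IsFixedCell L p.1 p.2).card

/-- The number of fixed cells in row `i`. -/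
def rowFixed {μ n : ℕ} (L : Fin μ → Fin n → Fin n → Fin n) (i : Fin n) : ℕ :=
  (Finset.univ.filter fun j : Fin n => IsFixedCell L i j).card

/-- The intersection spectrum `I^μ[n]`. -/
def Spectrum (μ n : ℕ) : Set ℕ :=
  {k | ∃ L : Fin μ → Fin n → Fin n → Fin n, IsMuWayLatinSquare L ∧ numFixed L = k}

theorem stmt_6 (L : Fin 4 → Fin 7 → Fin 7 → Fin 7)
    (hL : IsMuWayLatinSquare L) (i₁ i₂ i₃ : Fin 7)
    (h12 : i₁ ≠ i₂) (h13 : i₁ ≠ i₃) (h23 : i₂ ≠ i₃) :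
    ¬ (rowFixed L i₁ = 7 ∧ rowFixed L i₂ = 7 ∧ rowFixed L i₃ = 2) := by
  rintro ⟨h1, h2, h3⟩
  obtain ⟨hrow, hcol, hcell⟩ := hL
  -- all cells in rows i₁, i₂ are fixed
  have hfixrow : ∀ i : Fin 7, rowFixed L i = 7 → ∀ j, IsFixedCell L i j := by
    intro i hi j
    have huniv : (Finset.univ.filter fun j : Fin 7 => IsFixedCell L i j) = Finset.univ :=
      Finset.eq_univ_of_card _ (by simpa [rowFixed] using hi)
    have hj : j ∈ (Finset.univ.filter fun j : Fin 7 => IsFixedCell L i j) := by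
      rw [huniv]; exact Finset.mem_univ j
    exact (Finset.mem_filter.mp hj).2
  have hfix1 := hfixrow i₁ h1
  have hfix2 := hfixrow i₂ h2
  have h3' : (Finset.univ.filter fun j : Fin 7 => IsFixedCell L i₃ j).card = 2 := h3
  have hJcard : (Finset.univ.filter fun j : Fin 7 => ¬ IsFixedCell L i₃ j).card = 5 := by
    have hsplit := Finset.card_filter_add_card_filter_not
      (s := (Finset.univ : Finset (Fin 7))) (p := fun j => IsFixedCell L i₃ j)
    simp only [Finset.card_univ, Fintype.card_fin] at hsplit
    omega
  have hTcard :
      ((Finset.univ.filter fun j : Fin 7 => IsFixedCell L i₃ j).image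
        (fun j => L 0 i₃ j)).card = 2 := by
    rw [Finset.card_image_of_injOn ((hrow 0 i₃).injOn)]
    exact h3'
  have hScard : ((Finset.univ : Finset (Fin 7)) \
      ((Finset.univ.filter fun j : Fin 7 => IsFixedCell L i₃ j).image
        (fun j => L 0 i₃ j))).card = 5 := by
    rw [Finset.card_sdiff_of_subset (Finset.subset_univ _)]
    simp [hTcard]
  set T : Finset (Fin 7) :=
    (Finset.univ.filter fun j : Fin 7 => IsFixedCell L i₃ j).image (fun j => L 0 i₃ j)
    with hTdef
  set S : Finset (Fin 7) := (Finset.univ : Finset (Fin 7)) \ T with hSdef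
  -- values of row i₃ at non-fixed cells lie in S
  have hmemS : ∀ (m : Fin 4) (j : Fin 7), ¬ IsFixedCell L i₃ j → L m i₃ j ∈ S := by
    intro m j hj
    rw [hSdef, Finset.mem_sdiff]
    refine ⟨Finset.mem_univ _, fun hT' => ?_⟩
    rw [hTdef, Finset.mem_image] at hT'
    obtain ⟨j', hj'F, heq⟩ := hT'
    have hj'fix : IsFixedCell L i₃ j' := (Finset.mem_filter.mp hj'F).2
    have heq2 : L m i₃ j' = L m i₃ j := by rw [hj'fix m 0, heq]
    have : j' = j := hrow m i₃ heq2
    exact hj (this ▸ hj'fix)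
  -- row i₃ values differ from the fixed rows' values in same column
  have hne1 : ∀ (m : Fin 4) (j : Fin 7), L m i₃ j ≠ L 0 i₁ j := by
    intro m j hcontra
    have : L m i₃ j = L m i₁ j := by rw [hcontra, hfix1 j 0 m]
    exact h13 (hcol m j this).symm
  have hne2 : ∀ (m : Fin 4) (j : Fin 7), L m i₃ j ≠ L 0 i₂ j := by
    intro m j hcontra
    have : L m i₃ j = L m i₂ j := by rw [hcontra, hfix2 j 0 m]
    exact h23 (hcol m j this).symm
  -- at a non-fixed column, not both fixed-row values can be in S
  have hcolS : ∀ j : Fin 7, ¬ IsFixedCell L i₃ j →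
      ¬ (L 0 i₁ j ∈ S ∧ L 0 i₂ j ∈ S) := by
    rintro j hj ⟨ha, hb⟩
    have hinj : Function.Injective (fun a => L a i₃ j) := by
      rcases hcell i₃ j with hfix | hinj
      · exact absurd hfix hj
      · exact hinj
    have hab : L 0 i₁ j ≠ L 0 i₂ j := fun h => h12 (hcol 0 j h)
    have hsub : ({L 0 i₁ j, L 0 i₂ j} : Finset (Fin 7)) ⊆ S := by
      intro x hx
      rcases Finset.mem_insert.mp hx with rfl | hx
      · exact ha
      · rw [Finset.mem_singleton] at hx; exact hx ▸ hb
    have hcard2 : ({L 0 i₁ j, L 0 i₂ j} : Finset (Fin 7)).card = 2 := by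
      rw [Finset.card_insert_of_notMem (by simp [hab]), Finset.card_singleton]
    have hle : Fintype.card (Fin 4) ≤ (S \ {L 0 i₁ j, L 0 i₂ j}).card := by
      apply Finset.card_le_card_of_injOn (fun a => L a i₃ j)
      · intro m _
        rw [Finset.mem_coe, Finset.mem_sdiff]
        refine ⟨hmemS m j hj, fun hmem => ?_⟩
        rcases Finset.mem_insert.mp hmem with h | h
        · exact hne1 m j h
        · exact hne2 m j (Finset.mem_singleton.mp h)
      · exact hinj.injOn
    rw [Finset.card_sdiff_of_subset hsub, hScard, hcard2] at hle
    simp at hle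
  -- counting
  have hbound : ∀ (i : Fin 7),
      (((Finset.univ.filter fun j : Fin 7 => ¬ IsFixedCell L i₃ j)).filter
        (fun j => ¬ L 0 i j ∈ S)).card ≤ 2 := by
    intro i
    have hle : (((Finset.univ.filter fun j : Fin 7 => ¬ IsFixedCell L i₃ j)).filter
        (fun j => ¬ L 0 i j ∈ S)).card ≤ T.card := by
      apply Finset.card_le_card_of_injOn (fun j => L 0 i j)
      · intro j hj
        have hnotS := (Finset.mem_filter.mp hj).2
        simp only [hSdef, Finset.mem_sdiff, Finset.mem_univ, true_and, not_not] at hnotS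
        exact hnotS
      · exact (hrow 0 i).injOn.mono (fun x _ => Finset.mem_univ x)
    have hT2 : T.card = 2 := hTcard
    omega
  have hsplit1 := Finset.card_filter_add_card_filter_not
    (s := Finset.univ.filter fun j : Fin 7 => ¬ IsFixedCell L i₃ j)
    (p := fun j => L 0 i₁ j ∈ S)
  have hsplit2 := Finset.card_filter_add_card_filter_not
    (s := Finset.univ.filter fun j : Fin 7 => ¬ IsFixedCell L i₃ j)
    (p := fun j => L 0 i₂ j ∈ S)
  have hb1 := hbound i₁
  have hb2 := hbound i₂
  have hdisj : Disjoint
      ((Finset.univ.filter fun j : Fin 7 => ¬ IsFixedCell L i₃ j).filter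
        (fun j => L 0 i₁ j ∈ S))
      ((Finset.univ.filter fun j : Fin 7 => ¬ IsFixedCell L i₃ j).filter
        (fun j => L 0 i₂ j ∈ S)) := by
    rw [Finset.disjoint_left]
    intro j hjA hjB
    have h1' := Finset.mem_filter.mp hjA
    have h2' := Finset.mem_filter.mp hjB
    have hjJ : ¬ IsFixedCell L i₃ j := (Finset.mem_filter.mp h1'.1).2
    exact hcolS j hjJ ⟨h1'.2, h2'.2⟩
  have hunion := Finset.card_le_card
    (Finset.union_subset
      (Finset.filter_subset (fun j => L 0 i₁ j ∈ S)
        (Finset.univ.filter fun j : Fin 7 => ¬ IsFixedCell L i₃ j))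
      (Finset.filter_subset (fun j => L 0 i₂ j ∈ S)
        (Finset.univ.filter fun j : Fin 7 => ¬ IsFixedCell L i₃ j)))
  rw [Finset.card_union_of_disjoint hdisj] at hunion
  omega
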